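/- Let μ > 0, m > 0, ν₁ > 0, ν₂ > 0 and C > 0 be real numbers. For every (j₁, j₂) ∈ ℤ² with j₁² + j₂² ≥ (2C² + 1)/(μ·(min(ν₁, ν₂))⁴), every ω = (ω₁, ω₂) ∈ ℝ² with ω₁² + ω₂² ≤ C², and every α, γ ∈ ℝ, one has |Θ(j, ω, α, γ)| ≥ j₁² + j₂², where |·| denotes the complex modulus. -/

import Mathlib

/-- The symbol `Θ(j, ω, α, γ)` of the linear operator `L_{ω,α,γ}`. -/
noncomputable def Theta (μ m ν₁ ν₂ : ℝ) (j₁ j₂ : ℤ) (ω₁ ω₂ α γ : ℝ) : ℂ :=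
  ((-(ω₁ * (j₁ : ℝ) + ω₂ * (j₂ : ℝ)) ^ 2 +
      μ * (ν₁ ^ 2 * (j₁ : ℝ) ^ 2 + ν₂ ^ 2 * (j₂ : ℝ) ^ 2) ^ 2 + m : ℝ) : ℂ) +
    Complex.I * ((α * (ω₁ * (j₁ : ℝ) + ω₂ * (j₂ : ℝ)) +
      γ * (ω₁ * (j₁ : ℝ) + ω₂ * (j₂ : ℝ)) *
        (ν₁ ^ 2 * (j₁ : ℝ) ^ 2 + ν₂ ^ 2 * (j₂ : ℝ) ^ 2) ^ 2 : ℝ) : ℂ)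

/-- Lower bound on the modulus of the symbol `Θ` for large frequencies (from the proof of
Lemma 3.1 of the paper). -/
theorem Theta_lower_bound
    (μ m ν₁ ν₂ C : ℝ) (hμ : 0 < μ) (hm : 0 < m) (hν₁ : 0 < ν₁) (hν₂ : 0 < ν₂)
    (hC : 0 < C)
    (j₁ j₂ : ℤ)
    (hj : (2 * C ^ 2 + 1) / (μ * (min ν₁ ν₂) ^ 4) ≤ (j₁ : ℝ) ^ 2 + (j₂ : ℝ) ^ 2)
    (ω₁ ω₂ : ℝ) (hω : ω₁ ^ 2 + ω₂ ^ 2 ≤ C ^ 2)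
    (α γ : ℝ) :
    (j₁ : ℝ) ^ 2 + (j₂ : ℝ) ^ 2 ≤ ‖Theta μ m ν₁ ν₂ j₁ j₂ ω₁ ω₂ α γ‖ := by
  set R : ℝ := (j₁ : ℝ) ^ 2 + (j₂ : ℝ) ^ 2 with hR
  set n : ℝ := min ν₁ ν₂ with hn
  have hn0 : 0 < n := lt_min hν₁ hν₂
  have hR0 : 0 ≤ R := by positivity
  have hden : 0 < μ * n ^ 4 := by positivity
  have h3 : 2 * C ^ 2 + 1 ≤ μ * n ^ 4 * R := (div_le_iff₀' hden).mp hj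
  -- Cauchy-Schwarz
  have h1 : (ω₁ * (j₁ : ℝ) + ω₂ * (j₂ : ℝ)) ^ 2 ≤ C ^ 2 * R := by
    nlinarith [sq_nonneg (ω₁ * (j₂ : ℝ) - ω₂ * (j₁ : ℝ)), sq_nonneg ((j₁:ℝ)), sq_nonneg ((j₂:ℝ))]
  have hn1 : n ^ 2 ≤ ν₁ ^ 2 := by nlinarith [min_le_left ν₁ ν₂, hn0.le, hν₁.le]
  have hn2 : n ^ 2 ≤ ν₂ ^ 2 := by nlinarith [min_le_right ν₁ ν₂, hn0.le, hν₂.le]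
  have h2 : n ^ 4 * R ^ 2 ≤ (ν₁ ^ 2 * (j₁ : ℝ) ^ 2 + ν₂ ^ 2 * (j₂ : ℝ) ^ 2) ^ 2 := by
    have hle : n ^ 2 * R ≤ ν₁ ^ 2 * (j₁ : ℝ) ^ 2 + ν₂ ^ 2 * (j₂ : ℝ) ^ 2 := by
      have := sq_nonneg ((j₁ : ℝ)); have := sq_nonneg ((j₂ : ℝ))
      nlinarith
    have h0 : 0 ≤ n ^ 2 * R := by positivity
    calc n ^ 4 * R ^ 2 = (n ^ 2 * R) ^ 2 := by ring
      _ ≤ (ν₁ ^ 2 * (j₁ : ℝ) ^ 2 + ν₂ ^ 2 * (j₂ : ℝ) ^ 2) ^ 2 := by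
        exact pow_le_pow_left₀ h0 hle 2
  have hre : (Theta μ m ν₁ ν₂ j₁ j₂ ω₁ ω₂ α γ).re =
      -(ω₁ * (j₁ : ℝ) + ω₂ * (j₂ : ℝ)) ^ 2 +
      μ * (ν₁ ^ 2 * (j₁ : ℝ) ^ 2 + ν₂ ^ 2 * (j₂ : ℝ) ^ 2) ^ 2 + m := by
    simp only [Theta, Complex.add_re, Complex.ofReal_re, Complex.mul_re,
      Complex.I_re, Complex.I_im, Complex.ofReal_im]
    ring
  have hRre : R ≤ (Theta μ m ν₁ ν₂ j₁ j₂ ω₁ ω₂ α γ).re := by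
    rw [hre]
    have hμR2 : (2 * C ^ 2 + 1) * R ≤ μ * n ^ 4 * R ^ 2 := by
      calc (2 * C ^ 2 + 1) * R ≤ (μ * n ^ 4 * R) * R :=
            mul_le_mul_of_nonneg_right h3 hR0
        _ = μ * n ^ 4 * R ^ 2 := by ring
    have hμν : μ * n ^ 4 * R ^ 2 ≤ μ * (ν₁ ^ 2 * (j₁ : ℝ) ^ 2 + ν₂ ^ 2 * (j₂ : ℝ) ^ 2) ^ 2 := by
      calc μ * n ^ 4 * R ^ 2 = μ * (n ^ 4 * R ^ 2) := by ring
        _ ≤ _ := mul_le_mul_of_nonneg_left h2 hμ.le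
    have hCR : 0 ≤ C ^ 2 * R := by positivity
    linarith
  calc R ≤ (Theta μ m ν₁ ν₂ j₁ j₂ ω₁ ω₂ α γ).re := hRre
    _ ≤ |(Theta μ m ν₁ ν₂ j₁ j₂ ω₁ ω₂ α γ).re| := le_abs_self _
    _ ≤ ‖Theta μ m ν₁ ν₂ j₁ j₂ ω₁ ω₂ α γ‖ := Complex.abs_re_le_norm _
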